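/- Let a < b be reals, C > 0, λ > 0, β > 0. Let γ, ρ : [a, b] → ℝ be continuous with γ(z) ≥ C and 0 ≤ ρ(z) ≤ (λ/C)γ(z) for all z, and let m : [a, b] → ℝ be a differentiable nonnegative function satisfying m'(z) − γ(z)m(z) ≥ −βρ(z) on [a, b] and m(b) ≤ 1. Then for every z ∈ [a, b], m(z) ≤ exp(−∫_z^b γ(s) ds) + βλ/C; in particular m(z) ≤ e^{−C(b−z)} + βλ/C. -/

import Mathlib

/-- Let a < b, C > 0, λ > 0, β > 0. Let γ, ρ : [a,b] → ℝ be continuous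
with γ ≥ C and 0 ≤ ρ ≤ (λ/C)γ, and let m be a differentiable nonnegative function on
[a,b] with m' − γm ≥ −βρ and m(b) ≤ 1. Then for every z ∈ [a,b],
m(z) ≤ exp(−∫_z^b γ) + βλ/C; in particular m(z) ≤ e^{−C(b−z)} + βλ/C. -/
theorem stmt_13 (a b C lam β : ℝ) (hab : a < b) (hC : 0 < C) (hlam : 0 < lam)
    (hβ : 0 < β) (γ ρ m m' : ℝ → ℝ)
    (hγc : ContinuousOn γ (Set.Icc a b)) (hρc : ContinuousOn ρ (Set.Icc a b))
    (hγ : ∀ z ∈ Set.Icc a b, C ≤ γ z)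
    (hρ : ∀ z ∈ Set.Icc a b, 0 ≤ ρ z ∧ ρ z ≤ (lam / C) * γ z)
    (hm : ∀ z ∈ Set.Icc a b, HasDerivWithinAt m (m' z) (Set.Icc a b) z)
    (hm0 : ∀ z ∈ Set.Icc a b, 0 ≤ m z)
    (hineq : ∀ z ∈ Set.Icc a b, m' z - γ z * m z ≥ -β * ρ z)
    (hmb : m b ≤ 1) :
    ∀ z ∈ Set.Icc a b,
      m z ≤ Real.exp (-∫ s in z..b, γ s) + β * lam / C ∧
      m z ≤ Real.exp (-C * (b - z)) + β * lam / C := by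
  have huIcc : Set.uIcc a b = Set.Icc a b := Set.uIcc_of_le hab.le
  have hγc' : ContinuousOn γ (Set.uIcc a b) := huIcc ▸ hγc
  have hInt : IntervalIntegrable γ MeasureTheory.volume a b := hγc'.intervalIntegrable
  set G : ℝ → ℝ := fun z => ∫ s in a..z, γ s with hG
  set k : ℝ := β * lam / C with hk
  have hkpos : 0 < k := by positivity
  -- integrability on subintervals
  have hIntSub : ∀ x ∈ Set.Icc a b, ∀ y ∈ Set.Icc a b,
      IntervalIntegrable γ MeasureTheory.volume x y := by
    intro x hx y hy
    have hx' : x ∈ Set.uIcc a b := by rw [huIcc]; exact hx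
    have hy' : y ∈ Set.uIcc a b := by rw [huIcc]; exact hy
    exact hInt.mono_set (Set.uIcc_subset_uIcc hx' hy')
  have haMem : a ∈ Set.Icc a b := Set.left_mem_Icc.2 hab.le
  have hbMem : b ∈ Set.Icc a b := Set.right_mem_Icc.2 hab.le
  -- derivative of G at interior points
  have hGderiv : ∀ x ∈ Set.Ioo a b, HasDerivAt G (γ x) x := by
    intro x hx
    have hxI : x ∈ Set.Icc a b := Set.Ioo_subset_Icc_self hx
    have hca : ∀ y ∈ Set.Ioo a b, ContinuousAt γ y := fun y hy =>
      (hγc y (Set.Ioo_subset_Icc_self hy)).continuousAt (Icc_mem_nhds hy.1 hy.2)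
    have hmeas := ContinuousAt.stronglyMeasurableAtFilter (μ := MeasureTheory.volume)
      isOpen_Ioo hca
    exact intervalIntegral.integral_hasDerivAt_right (hIntSub a haMem x hxI)
      (hmeas x hx) (hca x hx)
  -- continuity of G on Icc
  have hGcont : ContinuousOn G (Set.Icc a b) := by
    have := intervalIntegral.continuousOn_primitive_interval' hInt
      (Set.left_mem_uIcc (a := a) (b := b))
    rwa [huIcc] at this
  -- the auxiliary function F
  set F : ℝ → ℝ := fun z => (m z - k) * Real.exp (-(G z)) with hF
  set Fd : ℝ → ℝ := fun x =>
    m' x * Real.exp (-(G x)) + (m x - k) * (Real.exp (-(G x)) * -(γ x)) with hFd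
  have hmcont : ContinuousOn m (Set.Icc a b) := fun z hz => (hm z hz).continuousWithinAt
  have hFcont : ContinuousOn F (Set.Icc a b) :=
    (hmcont.sub continuousOn_const).mul (hGcont.neg.rexp)
  have hIoo : interior (Set.Icc a b) = Set.Ioo a b := interior_Icc
  have hFderiv : ∀ x ∈ interior (Set.Icc a b),
      HasDerivWithinAt F (Fd x) (interior (Set.Icc a b)) x := by
    intro x hx
    rw [hIoo] at hx
    have hxI : x ∈ Set.Icc a b := Set.Ioo_subset_Icc_self hx
    have h1 : HasDerivWithinAt (fun z => m z - k) (m' x) (interior (Set.Icc a b)) x :=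
      ((hm x hxI).mono interior_subset).sub_const k
    have h2 : HasDerivAt (fun z => Real.exp (-(G z))) (Real.exp (-(G x)) * -(γ x)) x :=
      ((hGderiv x hx).neg).exp
    exact h1.mul h2.hasDerivWithinAt
  have hFd0 : ∀ x ∈ interior (Set.Icc a b), 0 ≤ Fd x := by
    intro x hx
    rw [hIoo] at hx
    have hxI : x ∈ Set.Icc a b := Set.Ioo_subset_Icc_self hx
    have hγx := hγ x hxI
    have hρx := hρ x hxI
    have hix := hineq x hxI
    have hex : (0:ℝ) < Real.exp (-(G x)) := Real.exp_pos _
    have hkey : 0 ≤ m' x - γ x * (m x - k) := by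
      have h1 : β * ρ x ≤ β * ((lam / C) * γ x) :=
        mul_le_mul_of_nonneg_left hρx.2 hβ.le
      have h2 : γ x * k = β * ((lam / C) * γ x) := by
        rw [hk]; ring
      nlinarith
    have : Fd x = Real.exp (-(G x)) * (m' x - γ x * (m x - k)) := by
      simp only [hFd]; ring
    rw [this]
    positivity
  have hmono : MonotoneOn F (Set.Icc a b) :=
    monotoneOn_of_hasDerivWithinAt_nonneg (convex_Icc a b) hFcont hFderiv hFd0
  intro z hz
  set I : ℝ := ∫ s in z..b, γ s with hI
  have hGsplit : G z + I = G b :=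
    intervalIntegral.integral_add_adjacent_intervals (hIntSub a haMem z hz) (hIntSub z hz b hbMem)
  have hFzb : (m z - k) * Real.exp (-(G z)) ≤ (m b - k) * Real.exp (-(G b)) :=
    hmono hz hbMem hz.2
  have h1 : m z - k ≤ (m b - k) * Real.exp (-I) := by
    have e1 : Real.exp (-(G z)) * Real.exp (G z) = 1 := by
      rw [← Real.exp_add]; simp
    have e2 : Real.exp (-(G b)) * Real.exp (G z) = Real.exp (-I) := by
      rw [← Real.exp_add]; congr 1; linarith
    calc m z - k = ((m z - k) * Real.exp (-(G z))) * Real.exp (G z) := by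
          rw [mul_assoc, e1, mul_one]
      _ ≤ ((m b - k) * Real.exp (-(G b))) * Real.exp (G z) :=
          mul_le_mul_of_nonneg_right hFzb (Real.exp_pos _).le
      _ = (m b - k) * Real.exp (-I) := by rw [mul_assoc, e2]
  have h2 : (m b - k) * Real.exp (-I) ≤ Real.exp (-I) := by
    have hb1 : m b - k ≤ 1 := by linarith
    nlinarith [Real.exp_pos (-I)]
  have hfirst : m z ≤ Real.exp (-I) + k := by linarith
  have hIge : C * (b - z) ≤ I := by
    have hint2 : IntervalIntegrable (fun _ => C) MeasureTheory.volume z b :=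
      intervalIntegrable_const
    have hcmp : ∫ s in z..b, (C:ℝ) ≤ ∫ s in z..b, γ s := by
      refine intervalIntegral.integral_mono_on hz.2 hint2 (hIntSub z hz b hbMem) ?_
      intro s hs
      exact hγ s ⟨le_trans hz.1 hs.1, hs.2⟩
    have : ∫ s in z..b, (C:ℝ) = C * (b - z) := by
      simp [mul_comm]
    linarith
  refine ⟨hfirst, ?_⟩
  have : Real.exp (-I) ≤ Real.exp (-C * (b - z)) := by
    apply Real.exp_le_exp.2; linarith
  linarith
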